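/- arXiv:1509.01039 — 5 statements merged into one kernel-verified Lean document; each statement's English description precedes it below -/
import Mathlib

section
/- Let R0 be an antiring and R = R0 × R0. Let V be a free R-module with base ε_1,…,ε_n (n ≥ 2), let μ1 = (1,0), μ2 = (0,1) ∈ R, and let π be a nontrivial permutation of {1,…,n}. Define ε_i' = μ1 ε_i + μ2 ε_{π(i)}. Then (ε_1',…,ε_n') is a base of V that is not projectively equal to (ε_1,…,ε_n); in particular V does not have unique base. -/
/-- The family `ε : ι → V` is a base of the `R`-module `V`: every `x ∈ V` has a unique
presentation as a finite `R`-linear combination of the `ε i`. -/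
def IsBaseFam (R : Type*) [CommSemiring R] {V : Type*} [AddCommMonoid V] [Module R V]
    {ι : Type*} (ε : ι → V) : Prop :=
  ∀ x : V, ∃! c : ι →₀ R, x = c.sum fun i r => r • ε i

/-- Over `R = R₀ × R₀` with `R₀` a nontrivial antiring, given a base
`ε₁, …, εₙ` (`n ≥ 2`) of a free `R`-module `V` and a nontrivial permutation `π` of the
indices, the family `ε'ᵢ = μ₁ • εᵢ + μ₂ • ε_{π i}` (with `μ₁ = (1,0)`, `μ₂ = (0,1)`)
is again a base of `V`, but it is not obtained from `ε` by multiplication by units;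
in particular `V` does not have unique base. -/
theorem not_unique_base_of_product {R₀ : Type*} [CommSemiring R₀] [Nontrivial R₀]
    (hadd : ∀ a b : R₀, a + b = 0 → a = 0 ∧ b = 0)
    {V : Type*} [AddCommMonoid V] [Module (R₀ × R₀) V]
    {n : ℕ} (hn : 2 ≤ n) (ε : Fin n → V) (hbase : IsBaseFam (R₀ × R₀) ε)
    (π : Equiv.Perm (Fin n)) (hπ : π ≠ 1)
    (ε' : Fin n → V)
    (hε' : ∀ i, ε' i = ((1 : R₀), (0 : R₀)) • ε i + ((0 : R₀), (1 : R₀)) • ε (π i)) :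
    IsBaseFam (R₀ × R₀) ε' ∧
      ¬ ∀ i, ∃ u : (R₀ × R₀)ˣ, ∃ j, ε' i = (u : R₀ × R₀) • ε j := by
  classical
  set T : (Fin n →₀ R₀ × R₀) → (Fin n →₀ R₀ × R₀) :=
    fun d => Finsupp.equivFunOnFinite.symm (fun i => ((d i).1, (d (π⁻¹ i)).2)) with hT
  set S : (Fin n →₀ R₀ × R₀) → (Fin n →₀ R₀ × R₀) :=
    fun c => Finsupp.equivFunOnFinite.symm (fun i => ((c i).1, (c (π i)).2)) with hS
  have hTapp : ∀ d i, T d i = ((d i).1, (d (π⁻¹ i)).2) := fun d i => rfl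
  have hSapp : ∀ c i, S c i = ((c i).1, (c (π i)).2) := fun c i => rfl
  have hST : ∀ c, T (S c) = c := by
    intro c; ext i <;> simp [hTapp, hSapp]
  have hTS : ∀ d, S (T d) = d := by
    intro d; ext i <;> simp [hTapp, hSapp]
  have hsum : ∀ d : Fin n →₀ R₀ × R₀,
      (d.sum fun i r => r • ε' i) = ((T d).sum fun i r => r • ε i) := by
    intro d
    rw [Finsupp.sum_fintype d (fun i r => r • ε' i) (fun i => zero_smul _ (ε' i)),
        Finsupp.sum_fintype (T d) (fun i r => r • ε i) (fun i => zero_smul _ (ε i))]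
    calc ∑ i, d i • ε' i
        = ∑ i, ((((d i).1, (0:R₀)) • ε i) + (((0:R₀), (d i).2) • ε (π i))) := by
          refine Finset.sum_congr rfl fun i _ => ?_
          rw [hε', smul_add, smul_smul, smul_smul]
          congr 2 <;> simp [Prod.ext_iff]
      _ = (∑ i, ((d i).1, (0:R₀)) • ε i) + ∑ i, ((0:R₀), (d i).2) • ε (π i) :=
          Finset.sum_add_distrib
      _ = (∑ i, ((d i).1, (0:R₀)) • ε i) + ∑ i, ((0:R₀), (d (π⁻¹ i)).2) • ε i := by
          congr 1
          rw [← Equiv.sum_comp π (fun i => ((0:R₀), (d (π⁻¹ i)).2) • ε i)]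
          simp
      _ = ∑ i, (T d i) • ε i := by
          rw [← Finset.sum_add_distrib]
          refine Finset.sum_congr rfl fun i _ => ?_
          rw [← add_smul, hTapp]
          congr 1
          simp [Prod.ext_iff]
  constructor
  · intro x
    obtain ⟨c, hc, huniq⟩ := hbase x
    refine ⟨S c, ?_, ?_⟩
    · show x = (S c).sum fun i r => r • ε' i
      rw [hsum, hST]; exact hc
    · intro d hd
      have h1 : T d = c :=
        huniq (T d) (show x = (T d).sum fun i r => r • ε i by rw [← hsum]; exact hd)
      calc d = S (T d) := (hTS d).symm
        _ = S c := by rw [h1]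
  · intro h
    obtain ⟨i, hi⟩ : ∃ i, π i ≠ i := by
      by_contra hc
      push_neg at hc
      exact hπ (Equiv.ext fun i => hc i)
    obtain ⟨u, j, hu⟩ := h i
    have hne : i ≠ π i := fun e => hi e.symm
    set c₀ : Fin n →₀ R₀ × R₀ :=
      Finsupp.single i ((1:R₀),(0:R₀)) + Finsupp.single (π i) ((0:R₀),(1:R₀)) with hc₀
    have hc₀sum : ε' i = c₀.sum fun k r => r • ε k := by
      rw [hc₀, Finsupp.sum_add_index' (h := fun k r => r • ε k)
          (fun k => zero_smul _ (ε k)) (fun k a b => add_smul a b (ε k)),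
        Finsupp.sum_single_index (zero_smul _ (ε i)),
        Finsupp.sum_single_index (zero_smul _ (ε (π i)))]
      exact hε' i
    have husum : ε' i = (Finsupp.single j (u : R₀ × R₀)).sum fun k r => r • ε k := by
      rw [Finsupp.sum_single_index (zero_smul _ (ε j))]; exact hu
    obtain ⟨c, hc, huniq⟩ := hbase (ε' i)
    have heq : c₀ = Finsupp.single j (u : R₀ × R₀) := by
      rw [huniq c₀ hc₀sum, huniq _ husum]
    have h1 : c₀ i = ((1:R₀),(0:R₀)) := by
      rw [hc₀]; simp [Finsupp.single_apply, hne, hi]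
    have h2 : c₀ (π i) = ((0:R₀),(1:R₀)) := by
      rw [hc₀]; simp [Finsupp.single_apply, hne, hi]
    have hji : j = i := by
      by_contra hji
      have : (Finsupp.single j (u : R₀ × R₀)) i = 0 := by
        simp [Finsupp.single_apply, hji]
      rw [← heq, h1] at this
      exact one_ne_zero (congrArg Prod.fst this)
    have hjpi : j = π i := by
      by_contra hji
      have : (Finsupp.single j (u : R₀ × R₀)) (π i) = 0 := by
        simp [Finsupp.single_apply, hji]
      rw [← heq, h2] at this
      exact one_ne_zero (congrArg Prod.snd this)
    exact hne (hji ▸ hjpi)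
end

section
/- Let (V, q) be a quadratic R-module with unique base 𝔅, and let b be a quasiminimal companion of q. For basic submodules W, W' of V with W ∩ W' = {0}, W is disjointly orthogonal to W' if and only if b(W, W') = 0. -/
/-- `B` is a base of the `R`-module `V`. -/
def IsBaseSet (R : Type*) [CommSemiring R] {V : Type*} [AddCommMonoid V] [Module R V]
    (B : Set V) : Prop :=
  ∀ x : V, ∃! c : B →₀ R, x = c.sum fun b r => r • (b : V)

/-- `q` is quasilinear on `S × T`. -/
def QlinOn {R : Type*} [CommSemiring R] {V : Type*} [AddCommMonoid V] [Module R V]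
    (q : V → R) (S T : Set V) : Prop :=
  ∀ x ∈ S, ∀ y ∈ T, q (x + y) = q x + q y

/-- `b` is a quasiminimal companion of `q` with respect to the base `B`:
it is a symmetric bilinear companion of `q` vanishing on every pair of distinct base
vectors on whose spans `q` is quasilinear. -/
def Quasiminimal {R : Type*} [CommSemiring R] {V : Type*} [AddCommMonoid V] [Module R V]
    (B : Set V) (q : V → R) (b : V →ₗ[R] V →ₗ[R] R) : Prop :=
  (∀ x y, b x y = b y x) ∧ (∀ x y, q (x + y) = q x + q y + b x y) ∧
    ∀ ε ∈ B, ∀ η ∈ B, ε ≠ η →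
      QlinOn q (Submodule.span R {ε} : Submodule R V) (Submodule.span R {η} : Submodule R V) →
      b ε η = 0

/-- For a quadratic module `(V, q)` with unique base `B`, a quasiminimal
companion `b` of `q`, and basic submodules `W = span S`, `W' = span S'` (`S, S' ⊆ B`) with
`W ∩ W' = 0` : `W` is disjointly orthogonal to `W'` iff `b(W, W') = 0`. -/
theorem disjOrth_iff_quasiminimal_zero {R : Type*} [CommSemiring R]
    {V : Type*} [AddCommMonoid V] [Module R V]
    (B : Set V) (hB : IsBaseSet R B)
    (hub : ∀ B' : Set V, IsBaseSet R B' → ∀ v ∈ B', ∃ u : Rˣ, ∃ w ∈ B, v = (u : R) • w)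
    (q : V → R) (hsmul : ∀ (a : R) (x : V), q (a • x) = a * a * q x)
    (b : V →ₗ[R] V →ₗ[R] R) (hqm : Quasiminimal B q b)
    (S S' : Set V) (hS : S ⊆ B) (hS' : S' ⊆ B)
    (hdisj : Submodule.span R S ⊓ Submodule.span R S' = ⊥) :
    QlinOn q (Submodule.span R S : Submodule R V) (Submodule.span R S' : Submodule R V) ↔
      ∀ x ∈ Submodule.span R S, ∀ y ∈ Submodule.span R S', b x y = 0 := by
  constructor
  · intro hql
    have key : ∀ ε ∈ S, ∀ η ∈ S', b ε η = 0 := by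
      intro ε hε η hη
      by_cases h : ε = η
      · have hmem : ε ∈ Submodule.span R S ⊓ Submodule.span R S' :=
          ⟨Submodule.subset_span hε, h ▸ Submodule.subset_span hη⟩
        rw [hdisj] at hmem
        have : ε = 0 := (Submodule.mem_bot R).mp hmem
        simp [this]
      · refine hqm.2.2 ε (hS hε) η (hS' hη) h ?_
        intro x hx y hy
        exact hql x (Submodule.span_mono (Set.singleton_subset_iff.mpr hε) hx)
          y (Submodule.span_mono (Set.singleton_subset_iff.mpr hη) hy)
    intro x hx y hy
    have h1 : ∀ ε ∈ S, b ε y = 0 := by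
      intro ε hε
      refine Submodule.span_induction (fun η hη => key ε hε η hη) (by simp) ?_ ?_ hy
      · intro u v _ _ hu hv; simp [hu, hv]
      · intro a u _ hu; simp [hu]
    refine Submodule.span_induction (fun ε hε => h1 ε hε) (by simp) ?_ ?_ hx
    · intro u v _ _ hu hv; simp [hu, hv]
    · intro a u _ hu; simp [hu]
  · intro hb x hx y hy
    rw [hqm.2.1 x y, hb x hx y hy, add_zero]
end

section
/- Let (V, q) be a quadratic R-module with unique base 𝔅, b a quasiminimal companion of q, and define ε ∼ η on 𝔅 by: ε = η, or there is a sequence ε = ε_0, ε_1, …, ε_r = η in 𝔅 with ε_i ≠ ε_{i+1} and b(ε_i, ε_{i+1}) ≠ 0 for all i. Let {𝔅_k | k ∈ K} be the equivalence classes and W_k the submodule with base 𝔅_k. Then each W_k is an indecomposable basic submodule, and V = ⊥_{k∈K} W_k. -/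
/-- `W₁` is disjointly orthogonal to `W₂` with respect to the quadratic form `q`. -/
def DisjOrth {R : Type*} [CommSemiring R] {V : Type*} [AddCommMonoid V] [Module R V]
    (q : V → R) (W₁ W₂ : Submodule R V) : Prop :=
  W₁ ⊓ W₂ = ⊥ ∧ QlinOn q (W₁ : Set V) (W₂ : Set V)

/-- The basic submodule with base `S` is indecomposable for `q`: there is no nontrivial
disjoint orthogonal decomposition of it into basic submodules. -/
def QIndecompOn {R : Type*} [CommSemiring R] {V : Type*} [AddCommMonoid V] [Module R V]
    (q : V → R) (S : Set V) : Prop :=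
  ¬ ∃ S₁ S₂ : Set V, S₁ ∪ S₂ = S ∧ Disjoint S₁ S₂ ∧ S₁.Nonempty ∧ S₂.Nonempty ∧
      DisjOrth q (Submodule.span R S₁) (Submodule.span R S₂)

/-- `V` is the internal direct sum of the family of submodules `W i`. -/
def IsInternalSum {R : Type*} [CommSemiring R] {V : Type*} [AddCommMonoid V] [Module R V]
    {ι : Type*} (W : ι → Submodule R V) : Prop :=
  ∀ x : V, ∃! c : ι →₀ V, (∀ i, c i ∈ W i) ∧ x = c.sum fun _ v => v

section Aux

variable {R : Type*} [CommSemiring R] {V : Type*} [AddCommMonoid V] [Module R V]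

noncomputable def baseRep {B : Set V} (hB : IsBaseSet R B) (x : V) : B →₀ R :=
  (hB x).exists.choose

lemma baseRep_spec {B : Set V} (hB : IsBaseSet R B) (x : V) :
    x = (baseRep hB x).sum fun b r => r • (b : V) := (hB x).exists.choose_spec

lemma baseRep_unique {B : Set V} (hB : IsBaseSet R B) {x : V} {c : B →₀ R}
    (h : x = c.sum fun b r => r • (b : V)) : c = baseRep hB x :=
  (hB x).unique h (baseRep_spec hB x)

lemma baseRep_zero {B : Set V} (hB : IsBaseSet R B) : baseRep hB (0 : V) = 0 :=
  (baseRep_unique hB (by simp)).symm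

lemma exists_rep_of_mem_span {B : Set V} (hB : IsBaseSet R B) {S : Set V} (hS : S ⊆ B)
    {x : V} (hx : x ∈ Submodule.span R S) :
    ∃ c : B →₀ R, (∀ β ∈ c.support, (β : V) ∈ S) ∧ x = c.sum fun b r => r • (b : V) := by
  classical
  induction hx using Submodule.span_induction with
  | mem y hy =>
      refine ⟨Finsupp.single ⟨y, hS hy⟩ 1, ?_, ?_⟩
      · intro β hβ
        have := Finsupp.support_single_subset hβ
        simp only [Finset.mem_singleton] at this
        subst this; exact hy
      · rw [Finsupp.sum_single_index (by simp)]; simp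
  | zero => exact ⟨0, by simp, by simp⟩
  | add u v hu hv ihu ihv =>
      obtain ⟨c₁, hc₁, hu'⟩ := ihu
      obtain ⟨c₂, hc₂, hv'⟩ := ihv
      refine ⟨c₁ + c₂, ?_, ?_⟩
      · intro β hβ
        have := Finsupp.support_add hβ
        rcases Finset.mem_union.mp this with h | h
        · exact hc₁ β h
        · exact hc₂ β h
      · rw [Finsupp.sum_add_index' (by simp) (by intros; rw [add_smul]), ← hu', ← hv']
  | smul a u hu ihu =>
      obtain ⟨c, hc, hu'⟩ := ihu
      refine ⟨a • c, ?_, ?_⟩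
      · intro β hβ
        exact hc β (Finsupp.support_smul hβ)
      · rw [Finsupp.sum_smul_index' (by simp), hu', Finsupp.smul_sum]
        simp [smul_smul]

lemma baseRep_support_subset {B : Set V} (hB : IsBaseSet R B) {S : Set V} (hS : S ⊆ B)
    {x : V} (hx : x ∈ Submodule.span R S) :
    ∀ β ∈ (baseRep hB x).support, (β : V) ∈ S := by
  obtain ⟨c, hc, hx'⟩ := exists_rep_of_mem_span hB hS hx
  rw [← baseRep_unique hB hx']
  exact hc

lemma span_inter_eq_bot {B : Set V} (hB : IsBaseSet R B) {S T : Set V} (hS : S ⊆ B) (hT : T ⊆ B)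
    (hST : ∀ v, v ∈ S → v ∈ T → False) :
    Submodule.span R S ⊓ Submodule.span R T = ⊥ := by
  rw [eq_bot_iff]
  rintro x ⟨hxS, hxT⟩
  have h1 := baseRep_support_subset hB hS hxS
  have h2 := baseRep_support_subset hB hT hxT
  have hz : baseRep hB x = 0 := by
    rw [← Finsupp.support_eq_empty, Finset.eq_empty_iff_forall_notMem]
    intro β hβ
    exact hST β (h1 β hβ) (h2 β hβ)
  have := baseRep_spec hB x
  rw [hz, Finsupp.sum_zero_index] at this
  simpa [Submodule.mem_bot] using this

lemma b_zero_span (b : V →ₗ[R] V →ₗ[R] R) {S T : Set V}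
    (h : ∀ s ∈ S, ∀ t ∈ T, b s t = 0) :
    ∀ x ∈ Submodule.span R S, ∀ y ∈ Submodule.span R T, b x y = 0 := by
  have step : ∀ s ∈ S, ∀ y ∈ Submodule.span R T, b s y = 0 := by
    intro s hs y hy
    induction hy using Submodule.span_induction with
    | mem t ht => exact h s hs t ht
    | zero => simp
    | add u v _ _ ihu ihv => rw [map_add, ihu, ihv, add_zero]
    | smul a u _ ih => rw [map_smul, smul_eq_mul, ih, mul_zero]
  intro x hx y hy
  induction hx using Submodule.span_induction with
  | mem s hs => exact step s hs y hy
  | zero => simp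
  | add u v _ _ ihu ihv => rw [map_add, LinearMap.add_apply, ihu, ihv, add_zero]
  | smul a u _ ih => rw [map_smul, LinearMap.smul_apply, ih, smul_zero]

end Aux

/-- Let `(V, q)` be a quadratic module with unique base `B` and `b` a
quasiminimal companion of `q`.  For `ε, η ∈ B` let `ε ∼ η` iff `ε = η` or there is a chain
of base vectors from `ε` to `η` with consecutive members distinct and `b`-value nonzero.
Then each submodule spanned by an equivalence class is an indecomposable basic submodule,
and `V` is the orthogonal sum of these submodules. -/
theorem components_indecomposable_orth_sum {R : Type*} [CommSemiring R]
    {V : Type*} [AddCommMonoid V] [Module R V]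
    (B : Set V) (hB : IsBaseSet R B)
    (hub : ∀ B' : Set V, IsBaseSet R B' → ∀ v ∈ B', ∃ u : Rˣ, ∃ w ∈ B, v = (u : R) • w)
    (q : V → R) (hsmul : ∀ (a : R) (x : V), q (a • x) = a * a * q x)
    (b : V →ₗ[R] V →ₗ[R] R) (hqm : Quasiminimal B q b)
    (edge : V → V → Prop)
    (hedge : ∀ x y, edge x y ↔ x ∈ B ∧ y ∈ B ∧ x ≠ y ∧ b x y ≠ 0)
    (cls : V → Set V)
    (hcls : ∀ x, cls x = {y ∈ B | x = y ∨ Relation.TransGen edge x y})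
    (𝒦 : Set (Set V)) (h𝒦 : 𝒦 = {C | ∃ x ∈ B, C = cls x}) :
    (∀ C ∈ 𝒦, QIndecompOn q C) ∧
      (∀ C ∈ 𝒦, ∀ C' ∈ 𝒦, C ≠ C' →
        DisjOrth q (Submodule.span R C) (Submodule.span R C')) ∧
      IsInternalSum (fun C : 𝒦 => Submodule.span R (C : Set V)) := by
  classical
  obtain ⟨hbsymm, hq, hqmin⟩ := hqm
  -- basic facts about edge / cls
  have esymm : ∀ x y, edge x y → edge y x := by
    intro x y h
    rw [hedge] at h ⊢
    obtain ⟨h1, h2, h3, h4⟩ := h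
    exact ⟨h2, h1, h3.symm, by rw [hbsymm y x]; exact h4⟩
  have tsymm : ∀ x y, Relation.TransGen edge x y → Relation.TransGen edge y x := by
    intro x y h
    induction h with
    | single h => exact Relation.TransGen.single (esymm _ _ h)
    | tail _ h ih => exact Relation.TransGen.head (esymm _ _ h) ih
  have mem_cls : ∀ x y, y ∈ cls x ↔ y ∈ B ∧ (x = y ∨ Relation.TransGen edge x y) := by
    intro x y; rw [hcls]; exact Iff.rfl
  have rsymm : ∀ x y, (x = y ∨ Relation.TransGen edge x y) →
      (y = x ∨ Relation.TransGen edge y x) := by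
    rintro x y (rfl | h)
    · exact Or.inl rfl
    · exact Or.inr (tsymm _ _ h)
  have rtrans : ∀ x y z, (x = y ∨ Relation.TransGen edge x y) →
      (y = z ∨ Relation.TransGen edge y z) → (x = z ∨ Relation.TransGen edge x z) := by
    rintro x y z (rfl | h1) (rfl | h2)
    · exact Or.inl rfl
    · exact Or.inr h2
    · exact Or.inr h1
    · exact Or.inr (h1.trans h2)
  have cls_eq : ∀ x z, (x = z ∨ Relation.TransGen edge x z) → cls x = cls z := by
    intro x z hxz
    ext y
    rw [mem_cls, mem_cls]
    constructor
    · rintro ⟨hyB, hr⟩; exact ⟨hyB, rtrans z x y (rsymm _ _ hxz) hr⟩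
    · rintro ⟨hyB, hr⟩; exact ⟨hyB, rtrans x z y hxz hr⟩
  have self_mem_cls : ∀ x ∈ B, x ∈ cls x := by
    intro x hx; rw [mem_cls]; exact ⟨hx, Or.inl rfl⟩
  have cls_subset_B : ∀ x, cls x ⊆ B := by
    intro x y hy; exact ((mem_cls x y).mp hy).1
  have K_subset_B : ∀ C ∈ 𝒦, C ⊆ B := by
    intro C hC
    rw [h𝒦] at hC
    obtain ⟨x, _, rfl⟩ := hC
    exact cls_subset_B x
  -- two classes sharing an element are equal
  have class_eq_of_mem : ∀ C ∈ 𝒦, ∀ C' ∈ 𝒦, ∀ z, z ∈ C → z ∈ C' → C = C' := by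
    intro C hC C' hC' z hz hz'
    rw [h𝒦] at hC hC'
    obtain ⟨x, hx, rfl⟩ := hC
    obtain ⟨x', hx', rfl⟩ := hC'
    rw [cls_eq x z ((mem_cls x z).mp hz).2, cls_eq x' z ((mem_cls x' z).mp hz').2]
  -- membership propagation along the relation
  have mem_cls_of_rel : ∀ x, ∀ z ∈ cls x, ∀ y ∈ B,
      (z = y ∨ Relation.TransGen edge z y) → y ∈ cls x := by
    intro x z hz y hyB hr
    rw [mem_cls]
    exact ⟨hyB, rtrans x z y ((mem_cls x z).mp hz).2 hr⟩
  -- Part 2: distinct classes are disjointly orthogonal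
  have part2 : ∀ C ∈ 𝒦, ∀ C' ∈ 𝒦, C ≠ C' →
      DisjOrth q (Submodule.span R C) (Submodule.span R C') := by
    intro C hC C' hC' hne
    have hdisj : ∀ v, v ∈ C → v ∈ C' → False := by
      intro v hv hv'
      exact hne (class_eq_of_mem C hC C' hC' v hv hv')
    have hbz : ∀ ε ∈ C, ∀ η ∈ C', b ε η = 0 := by
      intro ε hε η hη
      by_contra hbne
      rcases eq_or_ne ε η with rfl | hneq
      · exact hdisj ε hε hη
      · have hedge' : edge ε η := (hedge ε η).mpr
          ⟨K_subset_B C hC hε, K_subset_B C' hC' hη, hneq, hbne⟩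
        have : η ∈ C := by
          rw [h𝒦] at hC
          obtain ⟨x, hx, rfl⟩ := hC
          exact mem_cls_of_rel x ε hε η (K_subset_B C' hC' hη)
            (Or.inr (Relation.TransGen.single hedge'))
        exact hdisj η this hη
    refine ⟨span_inter_eq_bot hB (K_subset_B C hC) (K_subset_B C' hC') hdisj, ?_⟩
    intro x hx y hy
    rw [hq x y, b_zero_span b hbz x hx y hy, add_zero]
  -- Part 1: each class is indecomposable
  have part1 : ∀ C ∈ 𝒦, QIndecompOn q C := by
    intro C hC
    rintro ⟨S₁, S₂, hunion, hdisj, ⟨s₁, hs₁⟩, ⟨s₂, hs₂⟩, hbot, hql⟩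
    rw [h𝒦] at hC
    obtain ⟨x₀, hx₀, rfl⟩ := hC
    have hS₁C : S₁ ⊆ cls x₀ := hunion ▸ Set.subset_union_left
    have hS₂C : S₂ ⊆ cls x₀ := hunion ▸ Set.subset_union_right
    -- crossing edge gives contradiction
    have cross : ∀ ε η, ε ∈ S₁ → η ∈ S₂ → edge ε η → False := by
      intro ε η hε hη he
      obtain ⟨hεB, hηB, hneq, hbne⟩ := (hedge ε η).mp he
      apply hbne
      apply hqmin ε hεB η hηB hneq
      intro u hu v hv
      have hu' : u ∈ Submodule.span R S₁ :=
        Submodule.span_mono (Set.singleton_subset_iff.mpr hε) hu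
      have hv' : v ∈ Submodule.span R S₂ :=
        Submodule.span_mono (Set.singleton_subset_iff.mpr hη) hv
      exact hql u hu' v hv'
    have cross' : ∀ ε η, ε ∈ S₂ → η ∈ S₁ → edge ε η → False := by
      intro ε η hε hη he
      exact cross η ε hη hε (esymm _ _ he)
    -- chain from S₁ to S₂ must cross
    have chaincross : ∀ y z, Relation.TransGen edge y z → y ∈ S₁ → z ∈ S₂ → False := by
      intro y z h
      induction h with
      | single h => exact fun hy hz => cross _ _ hy hz h
      | @tail m w hym hmw ih =>
          intro hy hw
          have hmB : m ∈ B := ((hedge m w).mp hmw).1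
          have hmC : m ∈ cls x₀ :=
            mem_cls_of_rel x₀ y (hS₁C hy) m hmB (Or.inr hym)
          rw [← hunion] at hmC
          rcases hmC with hm | hm
          · exact cross m w hm hw hmw
          · exact ih hy hm
    have hx₀C : x₀ ∈ cls x₀ := self_mem_cls x₀ hx₀
    rw [← hunion] at hx₀C
    rcases hx₀C with hx₀1 | hx₀2
    · -- x₀ ∈ S₁, chain to s₂
      have hs₂C := hS₂C hs₂
      rcases ((mem_cls x₀ s₂).mp hs₂C).2 with rfl | hchain
      · exact Set.disjoint_left.mp hdisj hx₀1 hs₂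
      · exact chaincross x₀ s₂ hchain hx₀1 hs₂
    · -- x₀ ∈ S₂, chain from s₁ to x₀
      have hs₁C := hS₁C hs₁
      rcases rsymm _ _ ((mem_cls x₀ s₁).mp hs₁C).2 with rfl | hchain
      · exact Set.disjoint_left.mp hdisj hs₁ hx₀2
      · exact chaincross s₁ x₀ hchain hs₁ hx₀2
  refine ⟨part1, part2, ?_⟩
  -- Part 3: internal direct sum
  intro x
  set d : B →₀ R := baseRep hB x with hd
  have hKmem : ∀ β : B, cls (β : V) ∈ 𝒦 := by
    intro β; rw [h𝒦]; exact ⟨β, β.2, rfl⟩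
  let K : B → 𝒦 := fun β => ⟨cls (β : V), hKmem β⟩
  have hmemK : ∀ β : B, (β : V) ∈ (K β : Set V) := fun β => self_mem_cls _ β.2
  -- the determination lemma
  have main : ∀ c : 𝒦 →₀ V, (∀ C : 𝒦, c C ∈ Submodule.span R (C : Set V)) →
      x = c.sum (fun _ v => v) →
      ∀ C₀ : 𝒦, ∀ β : B, baseRep hB (c C₀) β = if K β = C₀ then d β else 0 := by
    intro c hc hx
    have hsupp : ∀ C₀ : 𝒦, ∀ β : B, baseRep hB (c C₀) β ≠ 0 → (β : V) ∈ (C₀ : Set V) := by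
      intro C₀ β hne
      exact baseRep_support_subset hB (K_subset_B _ C₀.2) (hc C₀) β
        (Finsupp.mem_support_iff.mpr hne)
    have zero_of_ne : ∀ C₀ : 𝒦, ∀ β : B, K β ≠ C₀ → baseRep hB (c C₀) β = 0 := by
      intro C₀ β hne
      by_contra h
      have hβC₀ : (β : V) ∈ (C₀ : Set V) := hsupp C₀ β h
      exact hne (Subtype.ext
        (class_eq_of_mem _ (K β).2 _ C₀.2 β (hmemK β) hβC₀))
    have ddecomp : d = ∑ C ∈ c.support, baseRep hB (c C) := by
      refine (baseRep_unique hB ?_).symm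
      rw [← Finsupp.sum_finsetSum_index (by simp) (by intros; rw [add_smul])]
      calc x = c.sum fun _ v => v := hx
        _ = ∑ C ∈ c.support, c C := rfl
        _ = ∑ C ∈ c.support, (baseRep hB (c C)).sum fun b r => r • (b : V) :=
            Finset.sum_congr rfl fun C _ => baseRep_spec hB (c C)
    have dval : ∀ β : B, d β = baseRep hB (c (K β)) β := by
      intro β
      rw [ddecomp, Finset.sum_apply']
      by_cases hmem : K β ∈ c.support
      · exact Finset.sum_eq_single_of_mem (K β) hmem
          fun C _ hne => zero_of_ne C β (Ne.symm hne)
      · rw [Finset.sum_eq_zero fun C hCm => zero_of_ne C β (by rintro rfl; exact hmem hCm)]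
        rw [Finsupp.notMem_support_iff.mp hmem, baseRep_zero]
        rfl
    intro C₀ β
    by_cases h : K β = C₀
    · subst h
      rw [if_pos rfl]
      exact (dval β).symm
    · rw [if_neg h]
      exact zero_of_ne C₀ β h
  -- the canonical decomposition
  set c₀ : 𝒦 →₀ V := d.sum (fun β r => Finsupp.single (K β) (r • (β : V))) with hc₀
  have prop1 : ∀ C : 𝒦, c₀ C ∈ Submodule.span R (C : Set V) := by
    intro C
    rw [hc₀, Finsupp.sum_apply]
    apply Submodule.finsuppSum_mem
    intro β _
    rw [Finsupp.single_apply]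
    split_ifs with h
    · rw [← h]
      exact Submodule.smul_mem _ _ (Submodule.subset_span (hmemK β))
    · exact Submodule.zero_mem _
  have prop2 : c₀.sum (fun _ v => v) = x := by
    rw [hc₀, Finsupp.sum_sum_index (fun _ => rfl) (fun _ _ _ => rfl)]
    have hsing : ∀ (β : B) (r : R),
        ((Finsupp.single (K β) (r • (β : V))).sum fun _ v => v) = r • (β : V) :=
      fun β r => Finsupp.sum_single_index rfl
    simp only [hsing]
    exact (baseRep_spec hB x).symm
  refine ⟨c₀, ⟨prop1, prop2.symm⟩, ?_⟩
  rintro c ⟨hc1, hc2⟩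
  have h1 := main c hc1 hc2
  have h2 := main c₀ prop1 prop2.symm
  ext C
  have hrep : baseRep hB (c C) = baseRep hB (c₀ C) :=
    Finsupp.ext fun β => (h1 C β).trans (h2 C β).symm
  rw [baseRep_spec hB (c C), hrep, ← baseRep_spec hB (c₀ C)]
end

section
/- Let (V, q) be a quadratic R-module with unique base, decomposed into indecomposable components V = ⊥_{k∈K} W_k. Then: (b) every indecomposable basic submodule U of V is contained in W_k for a unique k ∈ K; (c) the W_k are precisely the indecomposable basic orthogonal summands of V. -/
theorem rep_eq_of_isBaseSet {R : Type*} [CommSemiring R] {V : Type*} [AddCommMonoid V]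
    [Module R V] {B : Set V} (hB : IsBaseSet R B) {c d : V →₀ R}
    (hc : (c.support : Set V) ⊆ B) (hd : (d.support : Set V) ⊆ B)
    (h : (c.sum fun v r => r • v) = d.sum fun v r => r • v) : c = d := by
  have hc' : ∀ x ∈ c.support, x ∈ B := fun x hx => hc hx
  have hd' : ∀ x ∈ d.support, x ∈ B := fun x hx => hd hx
  have hcs : ((c.subtypeDomain (· ∈ B)).sum fun b r => r • (b : V)) = c.sum fun v r => r • v :=
    Finsupp.sum_subtypeDomain_index (h := fun v r => r • v) hc'
  have hds : ((d.subtypeDomain (· ∈ B)).sum fun b r => r • (b : V)) = d.sum fun v r => r • v :=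
    Finsupp.sum_subtypeDomain_index (h := fun v r => r • v) hd'
  obtain ⟨e, -, he⟩ := hB (c.sum fun v r => r • v)
  have h1 : c.subtypeDomain (· ∈ B) = e := he _ hcs.symm
  have h2 : d.subtypeDomain (· ∈ B) = e := he _ (by
    show (c.sum fun v r => r • v) = _
    rw [h]; exact hds.symm)
  have key : c.subtypeDomain (· ∈ B) = d.subtypeDomain (· ∈ B) := h1.trans h2.symm
  ext a
  by_cases ha : a ∈ B
  · have := DFunLike.congr_fun key ⟨a, ha⟩
    simpa [Finsupp.subtypeDomain_apply] using this
  · have h3 : c a = 0 := by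
      by_contra hne; exact ha (hc (Finsupp.mem_support_iff.mpr hne))
    have h4 : d a = 0 := by
      by_contra hne; exact ha (hd (Finsupp.mem_support_iff.mpr hne))
    rw [h3, h4]

theorem span_disjoint_of_isBaseSet {R : Type*} [CommSemiring R] {V : Type*} [AddCommMonoid V]
    [Module R V] {B : Set V} (hB : IsBaseSet R B) {S₁ S₂ : Set V}
    (h1 : S₁ ⊆ B) (h2 : S₂ ⊆ B) (hd : Disjoint S₁ S₂) :
    Submodule.span R S₁ ⊓ Submodule.span R S₂ = ⊥ := by
  rw [eq_bot_iff]
  rintro x ⟨hx1, hx2⟩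
  obtain ⟨c, hc, hcx⟩ := Submodule.mem_span_set.mp hx1
  obtain ⟨d, hdd, hdx⟩ := Submodule.mem_span_set.mp hx2
  have hcd : c = d := rep_eq_of_isBaseSet hB (hc.trans h1) (hdd.trans h2) (by rw [hcx, hdx])
  have hsupp : (c.support : Set V) ⊆ S₁ ∩ S₂ := fun v hv => ⟨hc hv, hdd (hcd ▸ hv)⟩
  have : c = 0 := by
    ext v
    by_contra hne
    exact (Set.disjoint_left.mp hd (hsupp (Finsupp.mem_support_iff.mpr hne)).1)
      (hsupp (Finsupp.mem_support_iff.mpr hne)).2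
  simp only [Submodule.mem_bot]
  rw [← hcx, this, Finsupp.sum_zero_index]

theorem base_mem_of_mem_span {R : Type*} [CommSemiring R] [Nontrivial R] {V : Type*}
    [AddCommMonoid V] [Module R V] {B : Set V} (hB : IsBaseSet R B) {s : V} (hs : s ∈ B)
    {C : Set V} (hC : C ⊆ B) (h : s ∈ Submodule.span R C) : s ∈ C := by
  obtain ⟨c, hc, hcx⟩ := Submodule.mem_span_set.mp h
  have hd : c = Finsupp.single s 1 :=
    rep_eq_of_isBaseSet hB (hc.trans hC) (by
      intro v hv
      rw [Finset.mem_coe, Finsupp.mem_support_iff, Finsupp.single_apply_ne_zero] at hv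
      exact hv.1 ▸ hs) (by rw [hcx, Finsupp.sum_single_index (zero_smul R s), one_smul])
  have : s ∈ c.support := by
    rw [hd, Finsupp.mem_support_iff, Finsupp.single_eq_same]
    exact one_ne_zero
  exact hc this

theorem bilin_zero_span {R : Type*} [CommSemiring R] {V : Type*} [AddCommMonoid V] [Module R V]
    (b : V →ₗ[R] V →ₗ[R] R) {S₁ S₂ : Set V} (h : ∀ ε ∈ S₁, ∀ η ∈ S₂, b ε η = 0) :
    ∀ x ∈ Submodule.span R S₁, ∀ y ∈ Submodule.span R S₂, b x y = 0 := by
  have step1 : ∀ ε ∈ S₁, ∀ y ∈ Submodule.span R S₂, b ε y = 0 := by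
    intro ε hε y hy
    have : Submodule.span R S₂ ≤ LinearMap.ker (b ε) :=
      Submodule.span_le.mpr fun η hη => LinearMap.mem_ker.mpr (h ε hε η hη)
    exact this hy
  intro x hx y hy
  have : Submodule.span R S₁ ≤ LinearMap.ker (b.flip y) :=
    Submodule.span_le.mpr fun ε hε => LinearMap.mem_ker.mpr (step1 ε hε y hy)
  exact this hx

theorem crossing_edge {α : Type*} {r : α → α → Prop} {S₁ S₂ : Set α} (hd : Disjoint S₁ S₂)
    {a c : α} (h : Relation.ReflTransGen r a c) (ha : a ∈ S₁) (hc : c ∈ S₂)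
    (hall : ∀ v, Relation.ReflTransGen r a v → v ∈ S₁ ∪ S₂) :
    ∃ p q, p ∈ S₁ ∧ q ∈ S₂ ∧ r p q := by
  revert hc
  induction h with
  | refl => exact fun hc => absurd hc (Set.disjoint_left.mp hd ha)
  | @tail m n hm hmn ih =>
    intro hc
    rcases hall m hm with hmem | hmem
    · exact ⟨m, n, hmem, hc, hmn⟩
    · exact ih hmem

/-- Let `(V, q)` be a quadratic module with unique base `B`, decomposed into
its indecomposable components (the submodules spanned by the equivalence classes `C ∈ 𝒦` of
base vectors). Then (b) every nonzero indecomposable basic submodule of `V` is contained in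
the component of a unique class, and (c) the components are precisely the nonzero
indecomposable basic orthogonal summands of `V`. -/
theorem components_unique_and_are_summands {R : Type*} [CommSemiring R]
    {V : Type*} [AddCommMonoid V] [Module R V]
    (B : Set V) (hB : IsBaseSet R B)
    (hub : ∀ B' : Set V, IsBaseSet R B' → ∀ v ∈ B', ∃ u : Rˣ, ∃ w ∈ B, v = (u : R) • w)
    (q : V → R) (hsmul : ∀ (a : R) (x : V), q (a • x) = a * a * q x)
    (b : V →ₗ[R] V →ₗ[R] R) (hqm : Quasiminimal B q b)
    (edge : V → V → Prop)
    (hedge : ∀ x y, edge x y ↔ x ∈ B ∧ y ∈ B ∧ x ≠ y ∧ b x y ≠ 0)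
    (cls : V → Set V)
    (hcls : ∀ x, cls x = {y ∈ B | x = y ∨ Relation.TransGen edge x y})
    (𝒦 : Set (Set V)) (h𝒦 : 𝒦 = {C | ∃ x ∈ B, C = cls x}) :
    (∀ S : Set V, S ⊆ B → S.Nonempty → QIndecompOn q S →
      ∃! C, C ∈ 𝒦 ∧ Submodule.span R S ≤ Submodule.span R C) ∧
    (∀ S : Set V, S ⊆ B →
      ((S.Nonempty ∧ QIndecompOn q S ∧
          DisjOrth q (Submodule.span R S) (Submodule.span R (B \ S))) ↔ S ∈ 𝒦)) := by
  obtain ⟨hbsym, hq2, hq3⟩ := hqm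
  have hesym : Symmetric edge := by
    intro x y h
    rw [hedge] at h ⊢
    exact ⟨h.2.1, h.1, h.2.2.1.symm, by rw [hbsym]; exact h.2.2.2⟩
  have hmemB : ∀ x y, edge x y → y ∈ B := fun x y h => ((hedge x y).mp h).2.1
  have hclsm : ∀ x y, y ∈ cls x ↔ y ∈ B ∧ Relation.ReflTransGen edge x y := by
    intro x y
    rw [hcls x]
    simp only [Set.mem_setOf_eq, Set.mem_sep_iff]
    constructor
    · rintro ⟨hyB, rfl | h⟩
      · exact ⟨hyB, Relation.ReflTransGen.refl⟩
      · exact ⟨hyB, h.to_reflTransGen⟩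
    · rintro ⟨hyB, h⟩
      refine ⟨hyB, ?_⟩
      rcases Relation.reflTransGen_iff_eq_or_transGen.mp h with rfl | h
      · exact Or.inl rfl
      · exact Or.inr h
  have hself : ∀ x ∈ B, x ∈ cls x := fun x hx =>
    (hclsm x x).mpr ⟨hx, Relation.ReflTransGen.refl⟩
  have hclosed : ∀ x y, y ∈ cls x → ∀ z, edge y z → z ∈ cls x := by
    intro x y hy z hz
    obtain ⟨hyB, hr⟩ := (hclsm x y).mp hy
    exact (hclsm x z).mpr ⟨hmemB y z hz, hr.tail hz⟩
  have hclseq : ∀ x ∈ B, ∀ y ∈ cls x, cls y = cls x := by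
    intro x hx y hy
    obtain ⟨hyB, hxy⟩ := (hclsm x y).mp hy
    have hyx : Relation.ReflTransGen edge y x := (@Relation.ReflTransGen.stdSymm _ edge ⟨fun _ _ h => hesym h⟩).symm _ _ hxy
    ext z
    simp only [hclsm]
    exact ⟨fun ⟨hz, h⟩ => ⟨hz, hxy.trans h⟩, fun ⟨hz, h⟩ => ⟨hz, hyx.trans h⟩⟩
  have hnb : ∀ ε ∈ B, ∀ η ∈ B, ε ≠ η → ¬ edge ε η → b ε η = 0 := by
    intro ε hε η hη hne hne'
    by_contra hbne
    exact hne' ((hedge ε η).mpr ⟨hε, hη, hne, hbne⟩)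
  -- pairwise b-zero gives QlinOn on spans
  have hqlin : ∀ S₁ S₂ : Set V, (∀ ε ∈ S₁, ∀ η ∈ S₂, b ε η = 0) →
      QlinOn q (Submodule.span R S₁ : Submodule R V) (Submodule.span R S₂ : Submodule R V) := by
    intro S₁ S₂ h x hx y hy
    rw [hq2 x y, bilin_zero_span b h x hx y hy, add_zero]
  have hBofR : ∀ u v, u ∈ B → Relation.ReflTransGen edge u v → v ∈ B := by
    intro u v hu h
    rcases Relation.reflTransGen_iff_eq_or_transGen.mp h with rfl | h
    · exact hu
    · cases h with
      | single h => exact hmemB _ _ h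
      | tail _ h => exact hmemB _ _ h
  -- key claim: indecomposable sets live in one class
  have hkey : ∀ S : Set V, S ⊆ B → QIndecompOn q S → ∀ s ∈ S, S ⊆ cls s := by
    intro S hSB hind s hs
    by_contra hnc
    rw [Set.not_subset] at hnc
    obtain ⟨t, htS, htc⟩ := hnc
    apply hind
    have hd : Disjoint (S ∩ cls s) (S \ cls s) :=
      Set.disjoint_left.mpr fun z hz1 hz2 => hz2.2 hz1.2
    have hbz : ∀ ε ∈ S ∩ cls s, ∀ η ∈ S \ cls s, b ε η = 0 := by
      intro ε hε η hη
      have hne : ε ≠ η := fun h => hη.2 (h ▸ hε.2)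
      exact hnb ε (hSB hε.1) η (hSB hη.1) hne
        (fun he => hη.2 (hclosed s ε hε.2 η he))
    exact ⟨S ∩ cls s, S \ cls s, Set.inter_union_diff S (cls s), hd,
      ⟨s, hs, hself s (hSB hs)⟩, ⟨t, htS, htc⟩,
      span_disjoint_of_isBaseSet hB (fun z hz => hSB hz.1) (fun z hz => hSB hz.1) hd,
      hqlin _ _ hbz⟩
  constructor
  · -- part (b)
    rintro S hSB ⟨s, hs⟩ hind
    refine ⟨cls s, ⟨h𝒦 ▸ ⟨s, hSB hs, rfl⟩, Submodule.span_mono (hkey S hSB hind s hs)⟩, ?_⟩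
    rintro C ⟨hC, hle⟩
    rw [h𝒦] at hC
    obtain ⟨x, hxB, rfl⟩ := hC
    rcases subsingleton_or_nontrivial R with hR | hR
    · haveI := Module.subsingleton R V
      rw [Subsingleton.elim x s]
    · have hsp : s ∈ Submodule.span R (cls x) := hle (Submodule.subset_span hs)
      have hclsB : cls x ⊆ B := fun y hy => ((hclsm x y).mp hy).1
      exact (hclseq x hxB s (base_mem_of_mem_span hB (hSB hs) hclsB hsp)).symm
  · -- part (c)
    intro S hSB
    constructor
    · rintro ⟨⟨s, hs⟩, hind, hinf, hql⟩
      have hsub : S ⊆ cls s := hkey S hSB hind s hs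
      have hnoleave : ∀ α ∈ S, ∀ β, edge α β → β ∈ S := by
        intro α hα β hαβ
        by_contra hβ
        have hβB : β ∈ B := hmemB _ _ hαβ
        have hne : α ≠ β := fun h => hβ (h ▸ hα)
        have hqs : QlinOn q (Submodule.span R {α} : Submodule R V)
            (Submodule.span R {β} : Submodule R V) := by
          intro u hu w hw
          exact hql u (Submodule.span_mono (Set.singleton_subset_iff.mpr hα) hu)
            w (Submodule.span_mono (Set.singleton_subset_iff.mpr (show β ∈ B \ S from ⟨hβB, hβ⟩)) hw)
        exact ((hedge α β).mp hαβ).2.2.2 (hq3 α (hSB hα) β hβB hne hqs)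
      have hsup : cls s ⊆ S := by
        intro y hy
        obtain ⟨hyB, hr⟩ := (hclsm s y).mp hy
        clear hy hyB
        induction hr with
        | refl => exact hs
        | tail h1 h2 ih => exact hnoleave _ ih _ h2
      rw [h𝒦]
      exact ⟨s, hSB hs, (Set.Subset.antisymm hsub hsup).symm ▸ rfl⟩
    · intro hS
      rw [h𝒦] at hS
      obtain ⟨x, hxB, rfl⟩ := hS
      have hclsB : cls x ⊆ B := fun y hy => ((hclsm x y).mp hy).1
      refine ⟨⟨x, hself x hxB⟩, ?_, ?_, ?_⟩
      · -- indecomposable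
        rintro ⟨S₁, S₂, hun, hdis, ⟨ε, hε⟩, ⟨η, hη⟩, hinf, hql⟩
        have hεc : ε ∈ cls x := hun ▸ Set.mem_union_left S₂ hε
        have hηc : η ∈ cls x := hun ▸ Set.mem_union_right S₁ hη
        have hxε := ((hclsm x ε).mp hεc).2
        have hxη := ((hclsm x η).mp hηc).2
        have hrt : Relation.ReflTransGen edge ε η :=
          ((@Relation.ReflTransGen.stdSymm _ edge ⟨fun _ _ h => hesym h⟩).symm _ _ hxε).trans hxη
        have hall : ∀ v, Relation.ReflTransGen edge ε v → v ∈ S₁ ∪ S₂ := by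
          intro v hv
          rw [hun]
          exact (hclsm x v).mpr ⟨hBofR ε v (hclsB hεc) hv, hxε.trans hv⟩
        obtain ⟨α, β, hα, hβ, hαβ⟩ := crossing_edge hdis hrt hε hη hall
        have hαB : α ∈ B := hclsB (hun ▸ Set.mem_union_left S₂ hα)
        have hβB : β ∈ B := hclsB (hun ▸ Set.mem_union_right S₁ hβ)
        have hne : α ≠ β := fun h => Set.disjoint_left.mp hdis hα (h ▸ hβ)
        have hqs : QlinOn q (Submodule.span R {α} : Submodule R V)
            (Submodule.span R {β} : Submodule R V) := by
          intro u hu w hw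
          exact hql u (Submodule.span_mono (Set.singleton_subset_iff.mpr hα) hu)
            w (Submodule.span_mono (Set.singleton_subset_iff.mpr hβ) hw)
        exact ((hedge α β).mp hαβ).2.2.2 (hq3 α hαB β hβB hne hqs)
      · -- orthogonal summand: inf = ⊥
        exact span_disjoint_of_isBaseSet hB hclsB Set.diff_subset (Set.disjoint_left.mpr fun z hz1 hz2 => hz2.2 hz1)
      · -- QlinOn
        refine hqlin _ _ ?_
        intro ε hε η hη
        have hne : ε ≠ η := fun h => hη.2 (h ▸ hε)
        exact hnb ε (hclsB hε) η hη.1 hne (fun he => hη.2 (hclosed x ε hε η he))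
end

section
/- Let γ be a symmetric bilinear form on a free R-module U and (q, b) a balanced quadratic pair on a free R-module V. If B and B' are two expansions of (q, b), then the bilinear forms γ ⊗ B and γ ⊗ B' on U ⊗ V induce the same balanced quadratic pair (q̃, b̃); moreover b̃ = γ ⊗ b and q̃(u ⊗ v) = γ(u,u) q(v) for all u ∈ U, v ∈ V. -/
open TensorProduct

/-- Let `γ` be a symmetric bilinear form on a free `R`-module `U` and
`(q, b)` a balanced quadratic pair on a free `R`-module `V`.  If `B` and `B'` are two
expansions of `(q, b)`, then the tensor forms `γ ⊗ B` and `γ ⊗ B'` on `U ⊗ V` induce the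
same balanced quadratic pair `(q̃, b̃)`; moreover `b̃ = γ ⊗ b` and
`q̃ (u ⊗ v) = γ(u,u) q(v)`. -/
theorem tensor_expansion_independent {R : Type*} [CommSemiring R]
    {U V : Type*} [AddCommMonoid U] [Module R U] [AddCommMonoid V] [Module R V]
    [Module.Free R U] [Module.Free R V]
    (γ : U →ₗ[R] U →ₗ[R] R) (hγ : ∀ u u', γ u u' = γ u' u)
    (q : V → R) (b : V →ₗ[R] V →ₗ[R] R)
    (hqsmul : ∀ (a : R) (x : V), q (a • x) = a * a * q x)
    (hbsymm : ∀ x y, b x y = b y x)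
    (hcomp : ∀ x y, q (x + y) = q x + q y + b x y)
    (hbal : ∀ x, b x x = 2 * q x)
    (B B' : V →ₗ[R] V →ₗ[R] R)
    (hBexp : ∀ x y, B x y + B y x = b x y) (hBq : ∀ x, B x x = q x)
    (hB'exp : ∀ x y, B' x y + B' y x = b x y) (hB'q : ∀ x, B' x x = q x)
    (G G' : U ⊗[R] V →ₗ[R] U ⊗[R] V →ₗ[R] R)
    (hG : ∀ (u₁ u₂ : U) (v₁ v₂ : V),
      G (u₁ ⊗ₜ[R] v₁) (u₂ ⊗ₜ[R] v₂) = γ u₁ u₂ * B v₁ v₂)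
    (hG' : ∀ (u₁ u₂ : U) (v₁ v₂ : V),
      G' (u₁ ⊗ₜ[R] v₁) (u₂ ⊗ₜ[R] v₂) = γ u₁ u₂ * B' v₁ v₂) :
    (∀ z, G z z = G' z z) ∧
    (∀ z w, G z w + G w z = G' z w + G' w z) ∧
    (∀ (u₁ u₂ : U) (v₁ v₂ : V),
      G (u₁ ⊗ₜ[R] v₁) (u₂ ⊗ₜ[R] v₂) + G (u₂ ⊗ₜ[R] v₂) (u₁ ⊗ₜ[R] v₁) =
        γ u₁ u₂ * b v₁ v₂) ∧
    (∀ (u : U) (v : V), G (u ⊗ₜ[R] v) (u ⊗ₜ[R] v) = γ u u * q v) := by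
  have key : ∀ a b c d a' b' c' d' : R, a = a' → d = d' → b + c = b' + c' →
      a + b + (c + d) = a' + b' + (c' + d') := by
    intro a b c d a' b' c' d' h1 h2 h3
    calc a + b + (c + d) = a + (b + c) + d := by ring
    _ = a' + (b' + c') + d' := by rw [h1, h2, h3]
    _ = a' + b' + (c' + d') := by ring
  have hpure : ∀ (u : U) (v : V) (w : U ⊗[R] V),
      G (u ⊗ₜ[R] v) w + G w (u ⊗ₜ[R] v) = G' (u ⊗ₜ[R] v) w + G' w (u ⊗ₜ[R] v) := by
    intro u v w
    induction w using TensorProduct.induction_on with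
    | zero => simp
    | tmul u' v' =>
      rw [hG, hG, hG', hG', hγ u' u, ← mul_add, ← mul_add, hBexp, hB'exp]
    | add x y hx hy =>
      simp only [map_add, LinearMap.add_apply]
      rw [add_add_add_comm, hx, hy, ← add_add_add_comm]
  have hsym : ∀ z w, G z w + G w z = G' z w + G' w z := by
    intro z w
    induction z using TensorProduct.induction_on with
    | zero => simp
    | tmul u v => exact hpure u v w
    | add x y hx hy =>
      simp only [map_add, LinearMap.add_apply]
      rw [add_add_add_comm, hx, hy, ← add_add_add_comm]
  have hdiag : ∀ z, G z z = G' z z := by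
    intro z
    induction z using TensorProduct.induction_on with
    | zero => simp
    | tmul u v => rw [hG, hG', hBq, hB'q]
    | add x y hx hy =>
      simp only [map_add, LinearMap.add_apply]
      exact key _ _ _ _ _ _ _ _ hx hy (hsym y x)
  refine ⟨hdiag, hsym, ?_, ?_⟩
  · intro u₁ u₂ v₁ v₂
    rw [hG, hG, hγ u₂ u₁, ← mul_add, hBexp]
  · intro u v
    rw [hG, hBq]
end
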